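/- Let V and Q be finite-dimensional real vector spaces, a_u and m, S symmetric bilinear forms on V and on Q respectively, a_p any bilinear form on Q, and b : V × Q → ℝ bilinear. Let e_u, ψ : ℝ → V and e_p, φ : ℝ → Q be differentiable. Assume that for all t ∈ ℝ: (i) a_u(e_u(t), v) − b(v, e_p(t) + φ(t)) = 0 for all v ∈ V; (ii) −b(e_u'(t) + ψ'(t), q) − S(e_p'(t) + φ'(t), q) − m(e_p'(t) + φ'(t), q) − a_p(e_p(t), q) = 0 for all q ∈ Q. Then for all t ∈ ℝ: (1/2)·d/dt[ a_u(e_u(t), e_u(t)) + m(e_p(t), e_p(t)) + S(e_p(t), e_p(t)) ] + a_p(e_p(t), e_p(t)) = b(e_u'(t), φ(t)) − b(ψ'(t), e_p(t)) − S(φ'(t), e_p(t)) − m(φ'(t), e_p(t)). -/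
import Mathlib

lemma quad_hasDerivAt {E : Type*} [NormedAddCommGroup E] [NormedSpace ℝ E]
    [FiniteDimensional ℝ E] (B : E →ₗ[ℝ] E →ₗ[ℝ] ℝ) (f : ℝ → E)
    (hf : Differentiable ℝ f) (t : ℝ) :
    HasDerivAt (fun s => B (f s) (f s))
      (B (deriv f t) (f t) + B (f t) (deriv f t)) t := by
  let L : E →ₗ[ℝ] E →L[ℝ] ℝ :=
    (LinearMap.toContinuousLinearMap : (E →ₗ[ℝ] ℝ) ≃ₗ[ℝ] (E →L[ℝ] ℝ)).toLinearMap.comp B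
  let Bc : E →L[ℝ] E →L[ℝ] ℝ := LinearMap.toContinuousLinearMap L
  have hc : HasDerivAt (fun s => Bc (f s)) (Bc (deriv f t)) t :=
    Bc.hasFDerivAt.comp_hasDerivAt t (hf t).hasDerivAt
  have := hc.clm_apply (hf t).hasDerivAt
  exact this

/-- **Energy identity for the semidiscrete error equations.**
With symmetric bilinear forms `a_u` on `V` and `m, S` on `Q`, an arbitrary bilinear
`a_p` on `Q`, a coupling form `b : V × Q → ℝ`, and differentiable curves
`e_u, ψ : ℝ → V`, `e_p, φ : ℝ → Q` satisfying the error equations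
(i) `a_u(e_u(t), v) − b(v, e_p(t) + φ(t)) = 0` for all `v`, and
(ii) `−b(e_u'(t) + ψ'(t), q) − S(e_p'(t) + φ'(t), q) − m(e_p'(t) + φ'(t), q)
      − a_p(e_p(t), q) = 0` for all `q`,
one has for all `t`:
`(1/2) d/dt [a_u(e_u,e_u) + m(e_p,e_p) + S(e_p,e_p)] + a_p(e_p,e_p)
  = b(e_u', φ) − b(ψ', e_p) − S(φ', e_p) − m(φ', e_p)`. -/
theorem energy_identity
    (V Q : Type*)
    [NormedAddCommGroup V] [NormedSpace ℝ V] [FiniteDimensional ℝ V]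
    [NormedAddCommGroup Q] [NormedSpace ℝ Q] [FiniteDimensional ℝ Q]
    (au : V →ₗ[ℝ] V →ₗ[ℝ] ℝ) (hausym : ∀ x y : V, au x y = au y x)
    (m S ap : Q →ₗ[ℝ] Q →ₗ[ℝ] ℝ)
    (hmsym : ∀ x y : Q, m x y = m y x) (hSsym : ∀ x y : Q, S x y = S y x)
    (b : V →ₗ[ℝ] Q →ₗ[ℝ] ℝ)
    (eu ψ : ℝ → V) (ep φ : ℝ → Q)
    (heu : Differentiable ℝ eu) (hψ : Differentiable ℝ ψ)
    (hep : Differentiable ℝ ep) (hφ : Differentiable ℝ φ)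
    (h1 : ∀ (t : ℝ) (v : V), au (eu t) v - b v (ep t + φ t) = 0)
    (h2 : ∀ (t : ℝ) (q : Q),
        -b (deriv eu t + deriv ψ t) q - S (deriv ep t + deriv φ t) q
          - m (deriv ep t + deriv φ t) q - ap (ep t) q = 0) :
    ∀ t : ℝ,
      (1 / 2) * deriv (fun s => au (eu s) (eu s) + m (ep s) (ep s) + S (ep s) (ep s)) t
          + ap (ep t) (ep t)
        = b (deriv eu t) (φ t) - b (deriv ψ t) (ep t)
          - S (deriv φ t) (ep t) - m (deriv φ t) (ep t) := by
  intro t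
  have hau := quad_hasDerivAt au eu heu t
  have hm := quad_hasDerivAt m ep hep t
  have hS := quad_hasDerivAt S ep hep t
  have hderiv : deriv (fun s => au (eu s) (eu s) + m (ep s) (ep s) + S (ep s) (ep s)) t
      = (au (deriv eu t) (eu t) + au (eu t) (deriv eu t))
        + (m (deriv ep t) (ep t) + m (ep t) (deriv ep t))
        + (S (deriv ep t) (ep t) + S (ep t) (deriv ep t)) :=
    ((hau.add hm).add hS).deriv
  rw [hderiv]
  have hA := h1 t (deriv eu t)
  have hB := h2 t (ep t)
  simp only [map_add, LinearMap.add_apply] at hA hB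
  linarith [hausym (deriv eu t) (eu t), hmsym (deriv ep t) (ep t),
    hSsym (deriv ep t) (ep t)]
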